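/- Let n ∈ ℕ and let X be a positive element of M_n(S) where S is the algebra of rapidly decreasing double sequences (a Fréchet *-algebra under matrix product). If the operator square root X^{1/2} has all matrix entries in ℓ₂(ℤ₊^{d/2} × ℤ₊^{d/2}), then all entries of X^{1/2} are rapidly decreasing, i.e., X^{1/2} ∈ M_n(S). -/

import Mathlib

open scoped ENNReal InnerProductSpace

/-- The index set `ℤ₊^{d/2}`. -/
abbrev Idx (d : ℕ) := Fin (d / 2) → ℕ

/-- The Hilbert space `ℂⁿ ⊗ ℓ₂(ℤ₊^{d/2}) = ℓ₂(Fin n × ℤ₊^{d/2})`. -/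
noncomputable abbrev MatH (n d : ℕ) := lp (fun _ : Fin n × Idx d => ℂ) 2

/-- The seminorm `r_m(a) = (Σ_{k,l} (|k|+1)^{2m} (|l|+1)^{2m} |a_{k,l}|²)^{1/2}`. -/
noncomputable def rsem (d m : ℕ) (a : Idx d → Idx d → ℂ) : ℝ≥0∞ :=
  (∑' k : Idx d, ∑' l : Idx d,
      ((∑ i, (k i : ℝ≥0∞)) + 1) ^ (2 * m) * ((∑ i, (l i : ℝ≥0∞)) + 1) ^ (2 * m) *
        (‖a k l‖₊ : ℝ≥0∞) ^ 2) ^ (1 / 2 : ℝ)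

/-- A double sequence is rapidly decreasing if all seminorms `r_m` are finite;
`S_d` is the Fréchet *-algebra of such sequences. -/
def RapidlyDecreasing (d : ℕ) (a : Idx d → Idx d → ℂ) : Prop :=
  ∀ m : ℕ, rsem d m a < ⊤

/-- The `(i,j)`-th block of the `n × n` operator matrix of an operator on
`ℂⁿ ⊗ ℓ₂(ℤ₊^{d/2})`, as a double sequence indexed by `ℤ₊^{d/2}`. -/
noncomputable def blockEntries (n d : ℕ) (X : MatH n d →L[ℂ] MatH n d)
    (i j : Fin n) (k l : Idx d) : ℂ :=
  ⟪X (lp.single 2 (j, l) (1 : ℂ)), lp.single 2 (i, k) (1 : ℂ)⟫_ℂ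

open scoped NNReal

/-! ### helper lemmas -/

noncomputable def wt (d : ℕ) (k : Idx d) : ℝ≥0∞ := (∑ i, (k i : ℝ≥0∞)) + 1

theorem wt_ne_top (d : ℕ) (k : Idx d) : wt d k ≠ ⊤ := by
  refine ENNReal.add_ne_top.2 ⟨?_, ENNReal.one_ne_top⟩
  exact (ENNReal.sum_lt_top.2 fun i _ => ENNReal.natCast_lt_top _).ne

theorem one_le_wt (d : ℕ) (k : Idx d) : 1 ≤ wt d k := le_add_self

theorem wt_ne_zero (d : ℕ) (k : Idx d) : wt d k ≠ 0 :=
  fun h => by simpa [h] using one_le_wt d k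

theorem tsum_pi_prod (N : ℕ) (f : ℕ → ℝ≥0∞) :
    ∑' k : Fin N → ℕ, ∏ i, f (k i) = (∑' n, f n) ^ N := by
  induction N with
  | zero =>
    rw [tsum_eq_single (fun i => i.elim0)
      (by intro b hb; exact absurd (funext fun i => i.elim0) hb)]
    simp
  | succ N ih =>
    rw [← (Fin.consEquiv (fun _ : Fin (N+1) => ℕ)).tsum_eq]
    simp only [Fin.consEquiv_apply]
    rw [ENNReal.tsum_prod']
    simp only [Fin.prod_univ_succ, Fin.cons_zero, Fin.cons_succ]
    rw [pow_succ]
    simp_rw [ENNReal.tsum_mul_left]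
    rw [ENNReal.tsum_mul_right, ih, mul_comm]

theorem zeta2 : Summable (fun n : ℕ => (((n:ℝ)+1) ^ 2)⁻¹) := by
  have h2 := (Real.summable_one_div_nat_pow.mpr one_lt_two).comp_injective
    (add_left_injective 1)
  refine h2.congr fun n => ?_
  simp [Function.comp, one_div]

theorem zeta2' : (∑' n : ℕ, (((n : ℝ≥0∞) + 1) ^ 2)⁻¹) ≠ ⊤ := by
  have h : ∀ n : ℕ, (((n : ℝ≥0∞) + 1) ^ 2)⁻¹ = (((((n : ℝ≥0) + 1) ^ 2)⁻¹ : ℝ≥0) : ℝ≥0∞) := by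
    intro n
    rw [ENNReal.coe_inv (by positivity), ENNReal.coe_pow]
    norm_num
  simp_rw [h]
  rw [ENNReal.tsum_coe_ne_top_iff_summable, ← NNReal.summable_coe]
  convert zeta2 using 2 with n
  push_cast; rfl

theorem zetaIdx (d : ℕ) : (∑' k : Idx d, (wt d k ^ (2 * (d / 2)))⁻¹) ≠ ⊤ := by
  have hbound : ∀ k : Idx d,
      (wt d k ^ (2 * (d / 2)))⁻¹ ≤ ∏ i, (((k i : ℝ≥0∞) + 1) ^ 2)⁻¹ := by
    intro k
    rw [← ENNReal.prod_inv_distrib (by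
      intro x _ y _ _
      exact Or.inl (pow_ne_zero _ (by simp)))]
    refine ENNReal.inv_le_inv.2 ?_
    calc ∏ i, ((k i : ℝ≥0∞) + 1) ^ 2 = (∏ i, ((k i : ℝ≥0∞) + 1)) ^ 2 := by
          rw [Finset.prod_pow]
      _ ≤ (∏ _i : Fin (d / 2), wt d k) ^ 2 := by
          refine pow_le_pow_left' (Finset.prod_le_prod' fun i _ => ?_) 2
          exact add_le_add (Finset.single_le_sum (f := fun a => ((k a : ℝ≥0∞)))
            (fun _ _ => zero_le) (Finset.mem_univ i)) le_rfl
      _ = wt d k ^ (2 * (d / 2)) := by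
          rw [Finset.prod_const, Finset.card_univ, Fintype.card_fin, ← pow_mul, mul_comm]
  have h2 : (∑' k : Fin (d / 2) → ℕ, ∏ i, (((k i : ℝ≥0∞) + 1) ^ 2)⁻¹) ≠ ⊤ := by
    rw [tsum_pi_prod (d / 2) (fun n => (((n : ℝ≥0∞) + 1) ^ 2)⁻¹)]
    exact ENNReal.pow_ne_top zeta2'
  exact ne_top_of_le_ne_top h2 (ENNReal.tsum_le_tsum hbound)

theorem tsum_diag_le {α : Type*} (F : α → α → ℝ≥0∞) :
    ∑' k, F k k ≤ ∑' k, ∑' l, F k l := by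
  have h1 : ∑' k, ∑' l, F k l = ∑' p : α × α, F p.1 p.2 :=
    (ENNReal.tsum_prod' (f := fun p : α × α => F p.1 p.2)).symm
  rw [h1]
  exact ENNReal.tsum_comp_le_tsum_of_injective
    (f := fun k : α => ((k, k) : α × α))
    (fun a b h => congrArg Prod.fst h) (fun p => F p.1 p.2)

theorem ofReal_sq_norm {E : Type*} [SeminormedAddGroup E] (x : E) :
    (‖x‖₊ : ℝ≥0∞) ^ (2:ℕ) = ENNReal.ofReal (‖x‖ ^ (2:ℝ)) := by
  rw [← ENNReal.ofReal_coe_nnreal, coe_nnnorm, ← ENNReal.rpow_natCast,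
    ENNReal.ofReal_rpow_of_nonneg (norm_nonneg _) (by norm_num)]
  norm_num

theorem parseval {ι : Type*} (f : lp (fun _ : ι => ℂ) 2) :
    ∑' q, (‖f q‖₊ : ℝ≥0∞) ^ 2 = (‖f‖₊ : ℝ≥0∞) ^ 2 := by
  have htr : (2 : ℝ≥0∞).toReal = 2 := by norm_num
  have hs : Summable fun q => ‖f q‖ ^ (2 : ℝ) := by
    have := (memℓp_gen_iff (p := 2) (E := fun _ : ι => ℂ) (by norm_num)).1 (lp.memℓp f)
    simpa [htr] using this
  have hnorm := lp.norm_rpow_eq_tsum (p := 2) (by norm_num) f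
  rw [htr] at hnorm
  calc ∑' q, (‖f q‖₊ : ℝ≥0∞) ^ 2 = ENNReal.ofReal (∑' q, ‖f q‖ ^ (2:ℝ)) := by
        rw [ENNReal.ofReal_tsum_of_nonneg (fun q => by positivity) hs]
        exact tsum_congr fun q => ofReal_sq_norm _
    _ = (‖f‖₊ : ℝ≥0∞) ^ 2 := by rw [← hnorm]; exact (ofReal_sq_norm f).symm

theorem mul_le_sq_add_sq (a b : ℝ≥0∞) : a * b ≤ a ^ 2 + b ^ 2 := by
  rcases le_total a b with h | h
  · calc a * b ≤ b * b := mul_le_mul_left h b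
      _ = b ^ 2 := (sq b).symm
      _ ≤ a ^ 2 + b ^ 2 := le_add_self
  · calc a * b ≤ a * a := mul_le_mul_right h a
      _ = a ^ 2 := (sq a).symm
      _ ≤ a ^ 2 + b ^ 2 := le_self_add

theorem rsem_ne_top_iff (d m : ℕ) (a : Idx d → Idx d → ℂ) :
    rsem d m a < ⊤ ↔
      (∑' k : Idx d, ∑' l : Idx d,
        wt d k ^ (2 * m) * wt d l ^ (2 * m) * (‖a k l‖₊ : ℝ≥0∞) ^ 2) ≠ ⊤ := by
  rw [rsem, lt_top_iff_ne_top]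
  rw [ne_eq, ENNReal.rpow_eq_top_iff_of_pos (by norm_num)]
  rfl

theorem stmt10' (d n : ℕ)
    (X R : MatH n d →L[ℂ] MatH n d)
    (hR : R.IsPositive) (hRR : R.comp R = X)
    (hXS : ∀ i j : Fin n, RapidlyDecreasing d (blockEntries n d X i j)) :
    ∀ i j : Fin n, RapidlyDecreasing d (blockEntries n d R i j) := by
  classical
  set ep : Fin n × Idx d → MatH n d := fun p => lp.single 2 p (1:ℂ) with hep
  have hsymm := ContinuousLinearMap.isSelfAdjoint_iff_isSymmetric.mp hR.isSelfAdjoint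
  set c : (Fin n × Idx d) → (Fin n × Idx d) → ℝ≥0∞ :=
    fun p q => (‖(R (ep q)) p‖₊ : ℝ≥0∞) ^ 2 with hc
  have hbe : ∀ (T : MatH n d →L[ℂ] MatH n d) (i j : Fin n) (k l : Idx d),
      (‖blockEntries n d T i j k l‖₊ : ℝ≥0∞) = (‖(T (ep (j, l))) (i, k)‖₊ : ℝ≥0∞) := by
    intro T i j k l
    rw [blockEntries, hep]
    simp only
    rw [lp.inner_single_right]
    simp [RCLike.inner_apply]
  have hsym : ∀ p q, c p q = c q p := by
    intro p q
    have h1 : ⟪R (ep q), ep p⟫_ℂ = (starRingEnd ℂ) ((R (ep q)) p) := by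
      rw [hep]; simp only; rw [lp.inner_single_right]; simp [RCLike.inner_apply]
    have h2 : ⟪ep q, R (ep p)⟫_ℂ = (R (ep p)) q := by
      rw [hep]; simp only; rw [lp.inner_single_left]; simp [RCLike.inner_apply]
    have h3 := hsymm (ep q) (ep p)
    simp only [ContinuousLinearMap.coe_coe] at h3
    rw [h1, h2] at h3
    rw [hc]
    simp only
    rw [← h3]
    simp
  have hrow : ∀ p, ∑' q, c q p = (‖R (ep p)‖₊ : ℝ≥0∞) ^ 2 := fun p => parseval (R (ep p))
  have hdiagX : ∀ (i : Fin n) (k : Idx d),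
      (‖R (ep (i, k))‖₊ : ℝ≥0∞) ^ 2 = (‖blockEntries n d X i i k k‖₊ : ℝ≥0∞) := by
    intro i k
    have h0 : blockEntries n d X i i k k = ⟪X (ep (i,k)), ep (i,k)⟫_ℂ := rfl
    have h1 : X (ep (i,k)) = R (R (ep (i,k))) := by rw [← hRR]; rfl
    have h2 := hsymm (R (ep (i,k))) (ep (i,k))
    simp only [ContinuousLinearMap.coe_coe] at h2
    have h3 : ⟪R (ep (i,k)), R (ep (i,k))⟫_ℂ = ((‖R (ep (i,k))‖ : ℂ)) ^ 2 :=
      inner_self_eq_norm_sq_to_K _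
    rw [h0, h1, h2, h3]
    rw [nnnorm_pow]
    norm_num
  -- finiteness of weighted diagonal sums
  have hG : ∀ (t : ℕ) (i : Fin n),
      (∑' k : Idx d, (wt d k ^ t) ^ 2 * (‖R (ep (i, k))‖₊ : ℝ≥0∞) ^ 2) ≠ ⊤ := by
    intro t i
    set s := t + d / 2 with hs
    have hXfin := (rsem_ne_top_iff d s (blockEntries n d X i i)).1 (hXS i i s)
    have hdiagfin : (∑' k : Idx d,
        wt d k ^ (2 * s) * wt d k ^ (2 * s) * (‖blockEntries n d X i i k k‖₊ : ℝ≥0∞) ^ 2) ≠ ⊤ :=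
      ne_top_of_le_ne_top hXfin (tsum_diag_le fun k l =>
        wt d k ^ (2 * s) * wt d l ^ (2 * s) * (‖blockEntries n d X i i k l‖₊ : ℝ≥0∞) ^ 2)
    refine ne_top_of_le_ne_top (ENNReal.add_ne_top.2 ⟨hdiagfin, zetaIdx d⟩) ?_
    rw [← ENNReal.tsum_add]
    refine ENNReal.tsum_le_tsum fun k => ?_
    rw [hdiagX i k]
    set w := wt d k with hw
    set x := (‖blockEntries n d X i i k k‖₊ : ℝ≥0∞) with hx
    have hw1 : 1 ≤ w := one_le_wt d k
    have hwne : w ^ (d / 2) ≠ 0 := pow_ne_zero _ (wt_ne_zero d k)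
    have hwnt : w ^ (d / 2) ≠ ⊤ := ENNReal.pow_ne_top (wt_ne_top d k)
    have key : (w ^ t) ^ 2 * x = (w ^ (t * 2 + d / 2) * x) * (w ^ (d / 2))⁻¹ := by
      calc (w ^ t) ^ 2 * x = w ^ (t * 2) * x * 1 := by rw [← pow_mul, mul_one]
        _ = w ^ (t * 2) * x * (w ^ (d / 2) * (w ^ (d / 2))⁻¹) := by
            rw [ENNReal.mul_inv_cancel hwne hwnt]
        _ = (w ^ (t * 2) * w ^ (d / 2) * x) * (w ^ (d / 2))⁻¹ := by ring
        _ = (w ^ (t * 2 + d / 2) * x) * (w ^ (d / 2))⁻¹ := by rw [pow_add]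
    rw [key]
    refine (mul_le_sq_add_sq _ _).trans (add_le_add ?_ ?_)
    · calc (w ^ (t * 2 + d / 2) * x) ^ 2 = w ^ ((t * 2 + d / 2) * 2) * x ^ 2 := by
            rw [mul_pow, ← pow_mul]
        _ ≤ w ^ (2 * s + 2 * s) * x ^ 2 :=
            mul_le_mul_left (pow_le_pow_right' hw1 (by omega)) _
        _ = w ^ (2 * s) * w ^ (2 * s) * x ^ 2 := by rw [pow_add]
    · rw [← ENNReal.inv_pow, ← pow_mul, show d / 2 * 2 = 2 * (d / 2) from by omega]
  -- main estimate
  intro i j m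
  rw [rsem_ne_top_iff]
  have hA : (∑' k : Idx d, ∑' l : Idx d, (wt d k ^ (2*m)) ^ 2 * c (i,k) (j,l)) ≠ ⊤ := by
    refine ne_top_of_le_ne_top (hG (2*m) i) ?_
    refine ENNReal.tsum_le_tsum fun k => ?_
    rw [ENNReal.tsum_mul_left]
    refine mul_le_mul_right ?_ _
    calc ∑' l, c (i,k) (j,l) ≤ ∑' q, c (i,k) q :=
          ENNReal.tsum_comp_le_tsum_of_injective
            (f := fun l : Idx d => ((j, l) : Fin n × Idx d))
            (fun a b h => congrArg Prod.snd h) (c (i,k))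
      _ = ∑' q, c q (i,k) := tsum_congr fun q => hsym (i,k) q
      _ = (‖R (ep (i,k))‖₊ : ℝ≥0∞) ^ 2 := hrow (i,k)
  have hB : (∑' k : Idx d, ∑' l : Idx d, (wt d l ^ (2*m)) ^ 2 * c (i,k) (j,l)) ≠ ⊤ := by
    rw [ENNReal.tsum_comm]
    refine ne_top_of_le_ne_top (hG (2*m) j) ?_
    refine ENNReal.tsum_le_tsum fun l => ?_
    rw [ENNReal.tsum_mul_left]
    refine mul_le_mul_right ?_ _
    calc ∑' k, c (i,k) (j,l) ≤ ∑' p, c p (j,l) :=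
          ENNReal.tsum_comp_le_tsum_of_injective
            (f := fun k : Idx d => ((i, k) : Fin n × Idx d))
            (fun a b h => congrArg Prod.snd h) (fun p => c p (j,l))
      _ = (‖R (ep (j,l))‖₊ : ℝ≥0∞) ^ 2 := hrow (j,l)
  refine ne_top_of_le_ne_top (ENNReal.add_ne_top.2 ⟨hA, hB⟩) ?_
  calc ∑' k, ∑' l, wt d k ^ (2*m) * wt d l ^ (2*m) * (‖blockEntries n d R i j k l‖₊ : ℝ≥0∞) ^ 2
      = ∑' k, ∑' l, wt d k ^ (2*m) * wt d l ^ (2*m) * c (i,k) (j,l) := by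
        refine tsum_congr fun k => tsum_congr fun l => ?_
        rw [hc]
        simp only
        rw [← hbe R i j k l]
    _ ≤ ∑' k, ∑' l, ((wt d k ^ (2*m)) ^ 2 + (wt d l ^ (2*m)) ^ 2) * c (i,k) (j,l) := by
        refine ENNReal.tsum_le_tsum fun k => ENNReal.tsum_le_tsum fun l => ?_
        exact mul_le_mul_left (mul_le_sq_add_sq (wt d k ^ (2*m)) (wt d l ^ (2*m))) _
    _ = (∑' k, ∑' l, (wt d k ^ (2*m)) ^ 2 * c (i,k) (j,l))
        + ∑' k, ∑' l, (wt d l ^ (2*m)) ^ 2 * c (i,k) (j,l) := by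
        rw [← ENNReal.tsum_add]
        refine tsum_congr fun k => ?_
        rw [← ENNReal.tsum_add]
        exact tsum_congr fun l => add_mul _ _ _

/-- Let `X` be a positive element of `M_n(S_d)`, i.e. a positive operator on
`ℂⁿ ⊗ ℓ₂(ℤ₊^{d/2})` all of whose blocks are rapidly decreasing.  If its operator
square root `X^{1/2}` has all matrix entries in `ℓ₂(ℤ₊^{d/2} × ℤ₊^{d/2})`, then all
blocks of `X^{1/2}` are rapidly decreasing, i.e. `X^{1/2} ∈ M_n(S_d)`. -/
theorem stmt10 (d n : ℕ) (hd : 0 < d) (hde : Even d) (hn : 0 < n)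
    (X R : MatH n d →L[ℂ] MatH n d)
    (hX : X.IsPositive) (hR : R.IsPositive) (hRR : R.comp R = X)
    (hXS : ∀ i j : Fin n, RapidlyDecreasing d (blockEntries n d X i j))
    (hRl2 : ∀ i j : Fin n, rsem d 0 (blockEntries n d R i j) ≠ ⊤) :
    ∀ i j : Fin n, RapidlyDecreasing d (blockEntries n d R i j) := by
  exact stmt10' d n X R hR hRR hXS
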